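/- Let θ_1, …, θ_n be real numbers all lying in an interval [a, b] with b − a ≤ π, and let p_1, …, p_n be nonnegative reals with Σ_j p_j = 1. Then |Σ_j p_j · exp(i θ_j)| ≥ cos((b − a)/2). (This is the key geometric fact showing that a convex combination of points on an arc of the unit circle of angular width at most π has modulus at least the distance from the origin to the chord joining the arc's endpoints.) -/

import Mathlib

open scoped Real in
/-- **Convex combinations on a circular arc.**  If `θ_1, …, θ_n ∈ [a, b]` with
`b - a ≤ π` and `p` is a probability vector, then
`|Σ_j p_j exp(i θ_j)| ≥ cos ((b - a)/2)`. -/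
theorem convex_combination_arc (n : ℕ) (θ p : Fin n → ℝ) (a b : ℝ)
    (hab : a ≤ b) (hwidth : b - a ≤ π)
    (hθ : ∀ j, θ j ∈ Set.Icc a b)
    (hp : ∀ j, 0 ≤ p j) (hsum : ∑ j, p j = 1) :
    Real.cos ((b - a) / 2) ≤
      ‖∑ j, (p j : ℂ) * Complex.exp (Complex.I * (θ j : ℂ))‖ := by
  set c : ℝ := (a + b) / 2 with hc
  set S : ℂ := ∑ j, (p j : ℂ) * Complex.exp (Complex.I * (θ j : ℂ)) with hS
  have key : Real.cos ((b - a) / 2) ≤ (S * Complex.exp (-(Complex.I * c))).re := by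
    rw [hS, Finset.sum_mul]
    have : ∀ j : Fin n,
        ((p j : ℂ) * Complex.exp (Complex.I * (θ j : ℂ)) * Complex.exp (-(Complex.I * c))).re
          = p j * Real.cos (θ j - c) := by
      intro j
      rw [mul_assoc, ← Complex.exp_add]
      have : Complex.I * (θ j : ℂ) + -(Complex.I * c) = ((θ j - c : ℝ) : ℂ) * Complex.I := by
        push_cast; ring
      rw [this, Complex.re_ofReal_mul, Complex.exp_ofReal_mul_I_re]
    rw [Complex.re_sum]
    simp only [this]
    calc Real.cos ((b - a) / 2) = ∑ j, p j * Real.cos ((b - a) / 2) := by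
          rw [← Finset.sum_mul, hsum, one_mul]
      _ ≤ ∑ j, p j * Real.cos (θ j - c) := by
          apply Finset.sum_le_sum
          intro j _
          apply mul_le_mul_of_nonneg_left _ (hp j)
          have h1 := (hθ j).1
          have h2 := (hθ j).2
          have habs : |θ j - c| ≤ (b - a) / 2 := by
            rw [abs_le]; constructor <;> [skip; skip] <;> simp [hc] <;> linarith
          calc Real.cos ((b - a) / 2) ≤ Real.cos |θ j - c| := by
                apply Real.cos_le_cos_of_nonneg_of_le_pi (abs_nonneg _) _ habs
                linarith [Real.pi_pos]
            _ = Real.cos (θ j - c) := Real.cos_abs _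
  calc Real.cos ((b - a) / 2) ≤ (S * Complex.exp (-(Complex.I * c))).re := key
    _ ≤ ‖S * Complex.exp (-(Complex.I * c))‖ := Complex.re_le_norm _
    _ = ‖S‖ := by
        rw [norm_mul]
        have : ‖Complex.exp (-(Complex.I * c))‖ = 1 := by
          rw [Complex.norm_exp]; simp [mul_comm]
        rw [this, mul_one]
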